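/- If f : ℕ≥1 → ℕ satisfies f(1) = 1 and, for every n > 1, f(n) = mex { f(m) XOR f(m+1) XOR ⋯ XOR f(n-1) : m = 1, 2, …, n } (where the sum for m = n is the empty XOR, equal to 0), then f(n) = 2^(ν₂(n)) for all n ≥ 1, where ν₂(n) is the 2-adic valuation of n. -/

import Mathlib

/-- least nonnegative integer not in `S` -/
noncomputable def mex (S : Set ℕ) : ℕ := sInf {n | n ∉ S}

/-- XOR of `f k` for `k ∈ [m, n)` -/
def xorIco (f : ℕ → ℕ) (m n : ℕ) : ℕ :=
  ((List.range' m (n - m)).map f).foldr (· ^^^ ·) 0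

namespace RulerAux

/-- Gray code -/
def gray (n : ℕ) : ℕ := n ^^^ n / 2

lemma addLow {k s : ℕ} (q : ℕ) (hs : s < 2 ^ k) : (2 ^ k * q) ^^^ s = 2 ^ k * q + s := by
  apply Nat.eq_of_testBit_eq
  intro j
  rw [Nat.testBit_xor, Nat.testBit_two_pow_mul_add q hs j, Nat.testBit_two_pow_mul]
  by_cases h : j < k
  · simp [h, Nat.not_le_of_lt h]
  · have hsj : s.testBit j = false :=
      Nat.testBit_lt_two_pow (lt_of_lt_of_le hs (Nat.pow_le_pow_right (by norm_num)
        (Nat.le_of_not_lt h)))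
    simp [h, Nat.le_of_not_lt h, hsj]

lemma xor_div_two (a b : ℕ) : (a ^^^ b) / 2 = a / 2 ^^^ b / 2 := by
  apply Nat.eq_of_testBit_eq
  intro j
  simp [Nat.testBit_div_two, Nat.testBit_xor]

lemma gray_xor (a b : ℕ) : gray a ^^^ gray b = gray (a ^^^ b) := by
  unfold gray
  rw [xor_div_two]
  apply Nat.eq_of_testBit_eq
  intro j
  simp only [Nat.testBit_xor]
  cases a.testBit j <;> cases b.testBit j <;> cases (a / 2).testBit j <;>
    cases (b / 2).testBit j <;> rfl

lemma gray_eq_zero {t : ℕ} (h : gray t = 0) : t = 0 := by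
  unfold gray at h
  have := Nat.xor_eq_zero_iff.mp h
  omega

lemma gray_inj {a b : ℕ} (h : gray a = gray b) : a = b := by
  have h2 : gray a ^^^ gray b = 0 := by rw [h, Nat.xor_self]
  rw [gray_xor] at h2
  have := gray_eq_zero h2
  exact Nat.xor_eq_zero_iff.mp this

lemma gray_lt {k t : ℕ} (h : t < 2 ^ k) : gray t < 2 ^ k :=
  Nat.xor_lt_two_pow h (lt_of_le_of_lt (Nat.div_le_self t 2) h)

lemma gray_surj {k v : ℕ} (hv : v < 2 ^ k) : ∃ t, t < 2 ^ k ∧ gray t = v := by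
  have hmaps : ∀ a ∈ Finset.range (2 ^ k), gray a ∈ Finset.range (2 ^ k) := by
    intro a ha
    simp only [Finset.mem_range] at *
    exact gray_lt ha
  have hsurj := Finset.surj_on_of_inj_on_of_card_le (fun a _ => gray a)
    hmaps (fun a b _ _ h => gray_inj h) le_rfl
  obtain ⟨t, ht, hgt⟩ := hsurj v (by simpa using hv)
  exact ⟨t, by simpa using ht, hgt.symm⟩

lemma gray_pow_sub_one (k : ℕ) : gray (2 ^ (k + 1) - 1) = 2 ^ k := by
  have hk : 0 < 2 ^ k := Nat.pow_pos (by norm_num)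
  have hpow : 2 ^ (k + 1) = 2 * 2 ^ k := by rw [pow_succ]; ring
  have hdiv : (2 ^ (k + 1) - 1) / 2 = 2 ^ k - 1 := by omega
  have hsplit : 2 ^ (k + 1) - 1 = 2 ^ k * 1 + (2 ^ k - 1) := by omega
  unfold gray
  rw [hdiv, hsplit, ← addLow 1 (by omega), Nat.xor_assoc, Nat.xor_self, Nat.xor_zero]
  omega

lemma xor4 (a b c : ℕ) : (a ^^^ b) ^^^ (a ^^^ c) = b ^^^ c := by
  rw [Nat.xor_comm a b, Nat.xor_assoc, Nat.xor_xor_cancel_left]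

lemma decomp {n : ℕ} (hn : 1 ≤ n) :
    ∃ Q, n = 2 ^ (padicValNat 2 n + 1) * Q + 2 ^ (padicValNat 2 n) := by
  set ν := padicValNat 2 n with hν
  have h1 : 2 ^ ν ∣ n := pow_padicValNat_dvd
  have h2 : ¬ 2 ^ (ν + 1) ∣ n := by
    haveI : Fact (Nat.Prime 2) := ⟨Nat.prime_two⟩
    exact pow_succ_padicValNat_not_dvd (by omega)
  obtain ⟨m, hm⟩ := h1
  have hodd : m % 2 = 1 := by
    rcases Nat.mod_two_eq_zero_or_one m with h | h
    · exfalso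
      apply h2
      obtain ⟨Q, hQ⟩ := Nat.dvd_of_mod_eq_zero h
      exact ⟨Q, by rw [hm, hQ, pow_succ]; ring⟩
    · exact h
  obtain ⟨q, hq⟩ : ∃ q, m = 2 * q + 1 := ⟨m / 2, by omega⟩
  refine ⟨q, ?_⟩
  rw [hm, hq, pow_succ]
  ring

lemma n_xor_pred {n : ℕ} (hn : 1 ≤ n) :
    n ^^^ (n - 1) = 2 ^ (padicValNat 2 n + 1) - 1 := by
  set ν := padicValNat 2 n with hν
  obtain ⟨Q, hQ⟩ := decomp hn
  have hk : 0 < 2 ^ ν := Nat.pow_pos (by norm_num)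
  have hpow : 2 ^ (ν + 1) = 2 * 2 ^ ν := by rw [pow_succ]; ring
  have h1 : n = 2 ^ (ν + 1) * Q + 2 ^ ν := hQ
  have h2 : n - 1 = 2 ^ (ν + 1) * Q + (2 ^ ν - 1) := by omega
  rw [h2, h1, ← addLow Q (by omega), ← addLow Q (show 2 ^ ν - 1 < 2 ^ (ν + 1) by omega),
    xor4, show (2:ℕ) ^ ν = 2 ^ ν * 1 by ring, addLow 1 (by omega)]
  omega

lemma ruler_eq_gray {n : ℕ} (hn : 1 ≤ n) :
    2 ^ (padicValNat 2 n) = gray n ^^^ gray (n - 1) := by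
  rw [gray_xor, n_xor_pred hn, gray_pow_sub_one]

lemma pred_xor_pow {n : ℕ} (hn : 1 ≤ n) :
    (n - 1) ^^^ (2 ^ (padicValNat 2 n + 1) - 1) = n := by
  rw [← n_xor_pred hn, Nat.xor_comm n (n - 1), ← Nat.xor_assoc, Nat.xor_self,
    Nat.zero_xor]

lemma xorIco_self (f : ℕ → ℕ) (m : ℕ) : xorIco f m m = 0 := by
  simp [xorIco]

lemma xorIco_cons (f : ℕ → ℕ) {m n : ℕ} (h : m < n) :
    xorIco f m n = f m ^^^ xorIco f (m + 1) n := by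
  unfold xorIco
  have h1 : n - m = (n - (m + 1)) + 1 := by omega
  rw [h1, List.range'_succ]
  simp

lemma xorIco_congr {f g : ℕ → ℕ} : ∀ (k m : ℕ), (∀ j, m ≤ j → j < m + k → f j = g j) →
    xorIco f m (m + k) = xorIco g m (m + k) := by
  intro k
  induction k with
  | zero => intro m _; simp [xorIco_self]
  | succ k ih =>
    intro m h
    rw [xorIco_cons f (by omega), xorIco_cons g (by omega),
      show m + (k + 1) = (m + 1) + k by omega,
      ih (m + 1) (fun j hj1 hj2 => h j (by omega) (by omega)),
      h m le_rfl (by omega)]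

lemma xorIco_ruler : ∀ (k m : ℕ), 1 ≤ m →
    xorIco (fun j => 2 ^ (padicValNat 2 j)) m (m + k) = gray (m - 1) ^^^ gray (m + k - 1) := by
  intro k
  induction k with
  | zero => intro m _; simp [xorIco_self, Nat.xor_self]
  | succ k ih =>
    intro m hm
    rw [xorIco_cons _ (by omega), show m + (k + 1) = (m + 1) + k by omega,
      ih (m + 1) (by omega)]
    simp only [Nat.add_sub_cancel]
    rw [ruler_eq_gray hm, xor4]

end RulerAux

open RulerAux in
theorem stmt0 (f : ℕ → ℕ) (h1 : f 1 = 1)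
    (hrec : ∀ n > 1, f n = mex {v | ∃ m, 1 ≤ m ∧ m ≤ n ∧ v = xorIco f m n}) :
    ∀ n ≥ 1, f n = 2 ^ (padicValNat 2 n) := by
  suffices H : ∀ n, 1 ≤ n → f n = 2 ^ (padicValNat 2 n) from fun n hn => H n hn
  intro n
  induction n using Nat.strong_induction_on with
  | _ n ih =>
    intro hn
    rcases eq_or_lt_of_le hn with h | h
    · rw [← h]
      simpa [padicValNat.one] using h1
    · -- n > 1
      set ν := padicValNat 2 n with hν
      have hcong : ∀ m, 1 ≤ m → m ≤ n → xorIco f m n = gray (m - 1) ^^^ gray (n - 1) := by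
        intro m hm hmn
        obtain ⟨k, rfl⟩ : ∃ k, n = m + k := ⟨n - m, by omega⟩
        rw [xorIco_congr k m (fun j hj1 hj2 => ih j hj2 (by omega)), xorIco_ruler k m hm]
      rw [hrec n h]
      unfold mex
      set S : Set ℕ := {v | ∃ m, 1 ≤ m ∧ m ≤ n ∧ v = xorIco f m n} with hS
      obtain ⟨Q, hQ⟩ := decomp (by omega : 1 ≤ n)
      rw [← hν] at hQ
      have hk : 0 < 2 ^ ν := Nat.pow_pos (by norm_num)
      have hpow : 2 ^ (ν + 1) = 2 * 2 ^ ν := by rw [pow_succ]; ring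
      have hnotmem : (2 : ℕ) ^ ν ∉ S := by
        rintro ⟨m, hm1, hm2, hv⟩
        rw [hcong m hm1 hm2, gray_xor] at hv
        have hg : gray ((m - 1) ^^^ (n - 1)) = gray (2 ^ (ν + 1) - 1) := by
          rw [← hv, gray_pow_sub_one]
        have heq := gray_inj hg
        have : m - 1 = (n - 1) ^^^ (2 ^ (ν + 1) - 1) := by
          rw [← heq, Nat.xor_comm (m - 1) (n - 1), Nat.xor_xor_cancel_left]
        rw [pred_xor_pow (by omega : 1 ≤ n)] at this
        omega
      have hbound : ∀ t, t < 2 ^ ν → (n - 1) ^^^ t ≤ n - 1 := by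
        intro t ht
        have h2 : n - 1 = 2 ^ (ν + 1) * Q + (2 ^ ν - 1) := by omega
        have hx : (2 ^ ν - 1) ^^^ t < 2 ^ ν := Nat.xor_lt_two_pow (by omega) ht
        have : (n - 1) ^^^ t = 2 ^ (ν + 1) * Q + ((2 ^ ν - 1) ^^^ t) := by
          rw [h2, ← addLow Q (show 2 ^ ν - 1 < 2 ^ (ν + 1) by omega), Nat.xor_assoc,
            addLow Q (by omega)]
        omega
      have hmemS : ∀ b, b < 2 ^ ν → b ∈ S := by
        intro b hlt
        obtain ⟨t, ht, hgt⟩ := gray_surj hlt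
        refine ⟨((n - 1) ^^^ t) + 1, by omega, by have := hbound t ht; omega, ?_⟩
        rw [hcong _ (by omega) (by have := hbound t ht; omega)]
        simp only [Nat.add_sub_cancel]
        rw [gray_xor, Nat.xor_comm (n - 1) t, Nat.xor_xor_cancel_right, hgt]
      have hne : {x | x ∉ S}.Nonempty := ⟨2 ^ ν, hnotmem⟩
      apply le_antisymm (Nat.sInf_le hnotmem)
      by_contra hlt
      push_neg at hlt
      exact Nat.sInf_mem hne (hmemS _ hlt)
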